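/- A non-zero global minimum of the total cost function F always exists when the ansatz is the full Pauli basis: there exist r, θ ∈ ℝ^{4ⁿ} with ‖r‖ = 1 and F(r,θ) = 0. In fact, for any unitary U such that U† H U is diagonal (such U exists by the spectral theorem for Hermitian matrices), writing the Pauli-basis coefficients of U in polar form, tr(U P_j)/2ⁿ = r_j e^{iθ_j}, yields such a point, and K(r,θ) = U. -/

import Mathlib

open Matrix Complex
open scoped Classical

noncomputable section

/-- Single-qubit Pauli matrices: `0 ↦ I`, `1 ↦ X`, `2 ↦ Y`, `3 ↦ Z`. -/
def pauli1 (a : Fin 4) : Matrix (Fin 2) (Fin 2) ℂ :=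
  if a = 0 then 1
  else if a = 1 then !![0, 1; 1, 0]
  else if a = 2 then !![0, -Complex.I; Complex.I, 0]
  else !![1, 0; 0, -1]

/-- The `n`-qubit Pauli string `σ^{(1)} ⊗ ⋯ ⊗ σ^{(n)}` associated to `s : Fin n → Fin 4`,
realized as a matrix on the `(Fin n → Fin 2)`-indexed space of dimension `2^n`. -/
def pauliOp {n : ℕ} (s : Fin n → Fin 4) :
    Matrix (Fin n → Fin 2) (Fin n → Fin 2) ℂ :=
  Matrix.of fun i j => ∏ k, pauli1 (s k) (i k) (j k)

/-- `G₁`: the off-diagonal Pauli strings (some factor is `X` or `Y`). -/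
def G1 (n : ℕ) : Finset (Fin n → Fin 4) :=
  Finset.univ.filter fun s => ∃ k, s k = 1 ∨ s k = 2

/-- The diagonal Pauli strings (every factor is `I` or `Z`). -/
def DiagStrings (n : ℕ) : Finset (Fin n → Fin 4) :=
  Finset.univ.filter fun s => ∀ k, s k = 0 ∨ s k = 3

variable {n d : ℕ}

/-- `K(r,θ) = Σ_j r_j e^{iθ_j} P_j`. -/
def Kmat (P : Fin d → Fin n → Fin 4) (x : (Fin d → ℝ) × (Fin d → ℝ)) :
    Matrix (Fin n → Fin 2) (Fin n → Fin 2) ℂ :=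
  ∑ j, ((x.1 j : ℂ) * Complex.exp (Complex.I * (x.2 j : ℂ))) • pauliOp (P j)

/-- The cost function `f(r,θ) = Σ_{P ∈ G₁} tr(K(r,θ)† H K(r,θ) P)²` (the traces being real). -/
def costf (H : Matrix (Fin n → Fin 2) (Fin n → Fin 2) ℂ)
    (P : Fin d → Fin n → Fin 4) (x : (Fin d → ℝ) × (Fin d → ℝ)) : ℝ :=
  ∑ Q ∈ G1 n, (((Kmat P x)ᴴ * H * Kmat P x * pauliOp Q).trace.re) ^ 2

/-- `φ_P(r,θ) = 2^{-n} tr(K(r,θ)† K(r,θ) P)` (real). -/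
def phi (P : Fin d → Fin n → Fin 4) (Q : Fin n → Fin 4)
    (x : (Fin d → ℝ) × (Fin d → ℝ)) : ℝ :=
  (1 / 2 ^ n) * ((Kmat P x)ᴴ * Kmat P x * pauliOp Q).trace.re

/-- `G₂`: non-identity Pauli strings `Q` with `P_i P_j ∈ {Q, -Q, iQ, -iQ}` for some `i, j`. -/
def G2 (P : Fin d → Fin n → Fin 4) : Finset (Fin n → Fin 4) :=
  Finset.univ.filter fun Q => Q ≠ (fun _ => 0) ∧ ∃ i j : Fin d, ∃ c : ℂ,
    (c = 1 ∨ c = -1 ∨ c = Complex.I ∨ c = -Complex.I) ∧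
    pauliOp (P i) * pauliOp (P j) = c • pauliOp Q

/-- The total cost function `F = f + Σ_{P ∈ G₂} φ_P²`. -/
def totalF (H : Matrix (Fin n → Fin 2) (Fin n → Fin 2) ℂ)
    (P : Fin d → Fin n → Fin 4) (x : (Fin d → ℝ) × (Fin d → ℝ)) : ℝ :=
  costf H P x + ∑ Q ∈ G2 P, phi P Q x ^ 2

end


section Aux
open Matrix Complex

lemma pauli1_conj (a : Fin 4) (i j : Fin 2) :
    (starRingEnd ℂ) (pauli1 a i j) = pauli1 a j i := by
  fin_cases a <;> fin_cases i <;> fin_cases j <;> simp [pauli1, Matrix.one_apply]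

lemma pauli1_complete (i j k l : Fin 2) :
    ∑ a : Fin 4, pauli1 a i j * pauli1 a k l = if i = l ∧ j = k then 2 else 0 := by
  fin_cases i <;> fin_cases j <;> fin_cases k <;> fin_cases l <;>
    simp [pauli1, Fin.sum_univ_four, Matrix.one_apply] <;> ring_nf

lemma pauli1_ortho (a b : Fin 4) :
    ∑ i : Fin 2, ∑ m : Fin 2, pauli1 a i m * pauli1 b m i = if a = b then 2 else 0 := by
  fin_cases a <;> fin_cases b <;>
    simp [pauli1, Fin.sum_univ_two, Matrix.one_apply] <;> ring_nf

lemma pauli1_trace (a : Fin 4) : ∑ i : Fin 2, pauli1 a i i = if a = 0 then 2 else 0 := by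
  fin_cases a <;> simp [pauli1, Fin.sum_univ_two, Matrix.one_apply]

lemma pauli1_diag_zero (a : Fin 4) (i : Fin 2) (h : a = 1 ∨ a = 2) : pauli1 a i i = 0 := by
  rcases h with h | h <;> subst h <;> fin_cases i <;> simp [pauli1]

/-- swap sum over functions with product -/
lemma sum_pi_prod {n : ℕ} {κ : Type*} [Fintype κ] (f : Fin n → κ → ℂ) :
    ∑ i : Fin n → κ, ∏ k, f k (i k) = ∏ k, ∑ x, f k x := by
  rw [Finset.prod_univ_sum, Fintype.piFinset_univ]

lemma pauliOp_conjTranspose {n : ℕ} (s : Fin n → Fin 4) : (pauliOp s)ᴴ = pauliOp s := by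
  ext i j
  simp only [Matrix.conjTranspose_apply, pauliOp, Matrix.of_apply, star_def, map_prod,
    pauli1_conj]

lemma prod_ite_all {n : ℕ} (p : Fin n → Prop) [∀ k, Decidable (p k)] (c : ℂ) :
    ∏ k, (if p k then c else 0) = if ∀ k, p k then c ^ n else 0 := by
  by_cases h : ∀ k, p k
  · simp [h, Finset.prod_const]
  · rw [if_neg h]
    push_neg at h
    obtain ⟨k, hk⟩ := h
    exact Finset.prod_eq_zero (Finset.mem_univ k) (if_neg hk)

lemma pauliOp_mul_apply {n : ℕ} (s t : Fin n → Fin 4) (i j : Fin n → Fin 2) :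
    (pauliOp s * pauliOp t) i j
      = ∏ k, ∑ x : Fin 2, pauli1 (s k) (i k) x * pauli1 (t k) x (j k) := by
  rw [Matrix.mul_apply, ← sum_pi_prod fun k x => pauli1 (s k) (i k) x * pauli1 (t k) x (j k)]
  simp [pauliOp, Finset.prod_mul_distrib]

lemma pauliOp_trace {n : ℕ} (s : Fin n → Fin 4) :
    (pauliOp s).trace = if s = (fun _ => 0) then (2 : ℂ) ^ n else 0 := by
  rw [Matrix.trace]
  simp only [Matrix.diag_apply, pauliOp, Matrix.of_apply]
  rw [sum_pi_prod fun k x => pauli1 (s k) x x]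
  simp only [pauli1_trace]
  rw [prod_ite_all (fun k => s k = 0)]
  congr 1
  simp [funext_iff]

lemma pauliOp_trace_mul {n : ℕ} (s t : Fin n → Fin 4) :
    (pauliOp s * pauliOp t).trace = if s = t then (2 : ℂ) ^ n else 0 := by
  rw [Matrix.trace]
  simp only [Matrix.diag_apply, pauliOp_mul_apply]
  rw [sum_pi_prod fun k x => ∑ y : Fin 2, pauli1 (s k) x y * pauli1 (t k) y x]
  have : ∀ k, (∑ x : Fin 2, ∑ y : Fin 2, pauli1 (s k) x y * pauli1 (t k) y x)
      = if s k = t k then (2:ℂ) else 0 := fun k => pauli1_ortho (s k) (t k)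
  rw [Finset.prod_congr rfl fun k _ => this k, prod_ite_all (fun k => s k = t k)]
  congr 1
  simp [funext_iff]

lemma pauliOp_complete {n : ℕ} (a b i j : Fin n → Fin 2) :
    ∑ s : Fin n → Fin 4, pauliOp s a b * pauliOp s i j
      = if a = j ∧ b = i then (2 : ℂ) ^ n else 0 := by
  simp only [pauliOp, Matrix.of_apply, ← Finset.prod_mul_distrib]
  rw [sum_pi_prod fun k x => pauli1 x (a k) (b k) * pauli1 x (i k) (j k)]
  have : ∀ k, (∑ x : Fin 4, pauli1 x (a k) (b k) * pauli1 x (i k) (j k))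
      = if a k = j k ∧ b k = i k then (2:ℂ) else 0 := fun k =>
    pauli1_complete (a k) (b k) (i k) (j k)
  rw [Finset.prod_congr rfl fun k _ => this k,
    prod_ite_all (fun k => a k = j k ∧ b k = i k)]
  congr 1
  simp [funext_iff, forall_and]


lemma pauli_expansion {n : ℕ} (A : Matrix (Fin n → Fin 2) (Fin n → Fin 2) ℂ) :
    ∑ s : Fin n → Fin 4, ((A * pauliOp s).trace / 2 ^ n) • pauliOp s = A := by
  ext i j
  simp only [Matrix.sum_apply, Matrix.smul_apply, smul_eq_mul]
  have h1 : ∀ s : Fin n → Fin 4, ((A * pauliOp s).trace / 2 ^ n) * pauliOp s i j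
      = ∑ a, ∑ b, (A a b / 2 ^ n) * (pauliOp s b a * pauliOp s i j) := by
    intro s
    rw [Matrix.trace]
    simp only [Matrix.diag_apply, Matrix.mul_apply]
    rw [Finset.sum_div, Finset.sum_mul]
    refine Finset.sum_congr rfl fun a _ => ?_
    rw [Finset.sum_div, Finset.sum_mul]
    refine Finset.sum_congr rfl fun b _ => ?_
    ring
  rw [Finset.sum_congr rfl fun s _ => h1 s, Finset.sum_comm]
  have h2 : ∀ a : Fin n → Fin 2,
      (∑ s : Fin n → Fin 4, ∑ b, A a b / 2 ^ n * (pauliOp s b a * pauliOp s i j))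
      = ∑ b, A a b / 2 ^ n * (if b = j ∧ a = i then (2:ℂ) ^ n else 0) := by
    intro a
    rw [Finset.sum_comm]
    refine Finset.sum_congr rfl fun b _ => ?_
    rw [← Finset.mul_sum, pauliOp_complete]
  rw [Finset.sum_congr rfl fun a _ => h2 a]
  have h3 : (2:ℂ) ^ n ≠ 0 := pow_ne_zero _ two_ne_zero
  rw [Finset.sum_eq_single i, Finset.sum_eq_single j]
  · rw [if_pos ⟨rfl, rfl⟩]; field_simp
  · intro b _ hb; rw [if_neg (by tauto), mul_zero]
  · simp
  · intro a _ ha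
    refine Finset.sum_eq_zero fun b _ => ?_
    rw [if_neg (by tauto), mul_zero]
  · simp

lemma trace_KhK {n d : ℕ} (P : Fin d → Fin n → Fin 4) (hP : Function.Injective P)
    (c : Fin d → ℂ) :
    ((∑ j, c j • pauliOp (P j))ᴴ * ∑ j, c j • pauliOp (P j)).trace
      = 2 ^ n * ∑ j, (starRingEnd ℂ) (c j) * c j := by
  rw [Matrix.conjTranspose_sum]
  simp only [Matrix.conjTranspose_smul, pauliOp_conjTranspose, Matrix.sum_mul,
    Matrix.mul_sum, Matrix.smul_mul, Matrix.mul_smul, Matrix.trace_sum, Matrix.trace_smul,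
    pauliOp_trace_mul, smul_eq_mul, star_def]
  rw [Finset.mul_sum]
  refine Finset.sum_congr rfl fun j _ => ?_
  rw [Finset.sum_eq_single j]
  · rw [if_pos rfl]; ring
  · intro j' _ hj'
    simp [hP.ne hj']
  · simp


lemma trace_isDiag_mul_G1 {n : ℕ} (M : Matrix (Fin n → Fin 2) (Fin n → Fin 2) ℂ)
    (hM : M.IsDiag) {Q : Fin n → Fin 4} (hQ : Q ∈ G1 n) : (M * pauliOp Q).trace = 0 := by
  obtain ⟨k, hk⟩ : ∃ k, Q k = 1 ∨ Q k = 2 := by simpa [G1] using hQ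
  rw [Matrix.trace]
  refine Finset.sum_eq_zero fun i _ => ?_
  rw [Matrix.diag_apply, Matrix.mul_apply]
  refine Finset.sum_eq_zero fun m _ => ?_
  by_cases h : i = m
  · subst h
    have h0 : pauliOp Q i i = 0 :=
      Finset.prod_eq_zero (Finset.mem_univ k) (pauli1_diag_zero _ _ hk)
    rw [h0, mul_zero]
  · rw [hM h, zero_mul]

lemma key_lemma {n : ℕ} (H : Matrix (Fin n → Fin 2) (Fin n → Fin 2) ℂ)
    (P : Fin (4 ^ n) → Fin n → Fin 4) (hP : Function.Bijective P)
    (U : Matrix (Fin n → Fin 2) (Fin n → Fin 2) ℂ) (hU : Uᴴ * U = 1)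
    (hDiag : (Uᴴ * H * U).IsDiag) (r θ : Fin (4 ^ n) → ℝ)
    (hrθ : ∀ j, (r j : ℂ) * Complex.exp (Complex.I * (θ j : ℂ)) =
      (U * pauliOp (P j)).trace / 2 ^ n) :
    Kmat P (r, θ) = U ∧ (∑ j, r j ^ 2 = 1) ∧ totalF H P (r, θ) = 0 := by
  have hK : Kmat P (r, θ) = U := by
    show (∑ j, ((r j : ℂ) * Complex.exp (Complex.I * (θ j : ℂ))) • pauliOp (P j)) = U
    calc (∑ j, ((r j : ℂ) * Complex.exp (Complex.I * (θ j : ℂ))) • pauliOp (P j))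
        = ∑ j, ((U * pauliOp (P j)).trace / 2 ^ n) • pauliOp (P j) :=
          Finset.sum_congr rfl fun j _ => by rw [hrθ j]
      _ = ∑ s : Fin n → Fin 4, ((U * pauliOp s).trace / 2 ^ n) • pauliOp s :=
          Fintype.sum_bijective P hP _ _ (fun j => rfl)
      _ = U := pauli_expansion U
  have hsum : (∑ j, r j ^ 2) = 1 := by
    have h1 := trace_KhK P hP.injective
      (fun j => (r j : ℂ) * Complex.exp (Complex.I * (θ j : ℂ)))
    have h2 : (∑ j, ((r j : ℂ) * Complex.exp (Complex.I * (θ j : ℂ))) • pauliOp (P j)) = U :=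
      hK
    rw [h2, hU] at h1
    have h3 : (1 : Matrix (Fin n → Fin 2) (Fin n → Fin 2) ℂ).trace = (2 : ℂ) ^ n := by
      rw [Matrix.trace_one]
      simp
    rw [h3] at h1
    have h4 : ∀ j, (starRingEnd ℂ) ((r j : ℂ) * Complex.exp (Complex.I * (θ j : ℂ)))
        * ((r j : ℂ) * Complex.exp (Complex.I * (θ j : ℂ))) = ((r j ^ 2 : ℝ) : ℂ) := by
      intro j
      rw [mul_comm ((starRingEnd ℂ) _), Complex.mul_conj]
      rw [Complex.normSq_mul, Complex.normSq_eq_norm_sq (Complex.exp _), Complex.norm_exp]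
      push_cast
      simp [Complex.mul_re]
      ring
    rw [Finset.sum_congr rfl fun j _ => h4 j] at h1
    have h5 : (2 : ℂ) ^ n ≠ 0 := pow_ne_zero _ two_ne_zero
    have h6 : ((∑ j, r j ^ 2 : ℝ) : ℂ) = 1 := by
      push_cast
      field_simp at h1
      push_cast at h1
      linear_combination -h1
    exact_mod_cast h6
  have hcost : costf H P (r, θ) = 0 := by
    unfold costf
    refine Finset.sum_eq_zero fun Q hQ => ?_
    rw [hK, trace_isDiag_mul_G1 _ hDiag hQ]
    simp
  have hphi : ∀ Q ∈ G2 P, phi P Q (r, θ) = 0 := by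
    intro Q hQ
    have hQ0 : Q ≠ (fun _ => 0) := (Finset.mem_filter.mp hQ).2.1
    unfold phi
    rw [hK, hU, Matrix.one_mul, pauliOp_trace, if_neg hQ0]
    simp
  refine ⟨hK, hsum, ?_⟩
  unfold totalF
  rw [hcost, Finset.sum_eq_zero fun Q hQ => by rw [hphi Q hQ]; ring]
  ring

end Aux

/-- when the ansatz is the full Pauli basis (`d = 4ⁿ`), a non-zero global
minimum of `F` exists: there are `r, θ` with `‖r‖ = 1` and `F(r,θ) = 0`. Moreover, for any
unitary `U` with `U† H U` diagonal, writing `tr(U P_j)/2ⁿ = r_j e^{iθ_j}` in polar form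
yields such a point, with `K(r,θ) = U`. -/
theorem statement7 {n : ℕ} (hn : 1 ≤ n)
    (H : Matrix (Fin n → Fin 2) (Fin n → Fin 2) ℂ) (hH : H.IsHermitian)
    (P : Fin (4 ^ n) → Fin n → Fin 4) (hP : Function.Bijective P) :
    (∃ r θ : Fin (4 ^ n) → ℝ, (∑ j, r j ^ 2 = 1) ∧ totalF H P (r, θ) = 0) ∧
    (∀ U : Matrix (Fin n → Fin 2) (Fin n → Fin 2) ℂ, Uᴴ * U = 1 →
      (Uᴴ * H * U).IsDiag →
      ∀ r θ : Fin (4 ^ n) → ℝ,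
        (∀ j, (r j : ℂ) * Complex.exp (Complex.I * (θ j : ℂ)) =
          (U * pauliOp (P j)).trace / 2 ^ n) →
        Kmat P (r, θ) = U ∧ (∑ j, r j ^ 2 = 1) ∧ totalF H P (r, θ) = 0) := by
  have key : ∀ U : Matrix (Fin n → Fin 2) (Fin n → Fin 2) ℂ, Uᴴ * U = 1 →
      (Uᴴ * H * U).IsDiag →
      ∀ r θ : Fin (4 ^ n) → ℝ,
        (∀ j, (r j : ℂ) * Complex.exp (Complex.I * (θ j : ℂ)) =
          (U * pauliOp (P j)).trace / 2 ^ n) →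
        Kmat P (r, θ) = U ∧ (∑ j, r j ^ 2 = 1) ∧ totalF H P (r, θ) = 0 :=
    fun U hU hD r θ h => key_lemma H P hP U hU hD r θ h
  refine ⟨?_, key⟩
  set U : Matrix (Fin n → Fin 2) (Fin n → Fin 2) ℂ := (hH.eigenvectorUnitary :
    Matrix (Fin n → Fin 2) (Fin n → Fin 2) ℂ) with hUdef
  have hU : Uᴴ * U = 1 := by
    rw [← Matrix.star_eq_conjTranspose]
    exact hH.eigenvectorUnitary.prop.1
  have hD : (Uᴴ * H * U).IsDiag := by
    have hst : Uᴴ * H * U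
        = Matrix.diagonal (RCLike.ofReal ∘ hH.eigenvalues) := by
      conv_lhs => rw [hH.spectral_theorem]
      rw [Unitary.conjStarAlgAut_apply, Matrix.star_eq_conjTranspose, ← hUdef]
      simp only [Matrix.mul_assoc]
      rw [hU, Matrix.mul_one, ← Matrix.mul_assoc, hU, Matrix.one_mul]
    rw [hst]
    exact Matrix.isDiag_diagonal _
  set c : Fin (4 ^ n) → ℂ := fun j => (U * pauliOp (P j)).trace / 2 ^ n with hc
  refine ⟨fun j => ‖c j‖, fun j => (c j).arg, ?_⟩
  obtain ⟨_, h1, h2⟩ := key U hU hD (fun j => ‖c j‖) (fun j => (c j).arg)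
    (fun j => by rw [mul_comm Complex.I]; exact Complex.norm_mul_exp_arg_mul_I (c j))
  exact ⟨h1, h2⟩
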